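/- arXiv:2309.14749 — 4 statements merged into one kernel-verified Lean document; each statement's English description precedes it below -/
import Mathlib

section
/- Let a > 1 and define f(z) = ∏_{k=1}^∞ (1 - z/a^k)/(1 + z/a^k). Then for every real x ≥ a, writing x = a^{n+η} with n ∈ ℕ and η ∈ [0,1), we have |f(x)| ≤ (a^η - 1)/(a^η + 1) ≤ (a-1)/(a+1). -/
open Real Filter

private lemma aux_multipliable (a x : ℝ) (ha : 1 < a) (hx : 0 < x) :
    Multipliable (fun k : ℕ => (1 - x / a ^ (k + 1)) / (1 + x / a ^ (k + 1))) := by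
  have ha0 : (0:ℝ) < a := lt_trans one_pos ha
  obtain ⟨N, hN⟩ := pow_unbounded_of_one_lt (2 * x) ha
  -- the tail from N: factors are positive
  set t : ℕ → ℝ := fun k => x / a ^ (k + N + 1) with ht
  have htpos : ∀ k, 0 < t k := fun k => div_pos hx (pow_pos ha0 _)
  have hthalf : ∀ k, t k ≤ 1 / 2 := by
    intro k
    rw [ht, div_le_div_iff₀ (pow_pos ha0 _) two_pos]
    have hp := pow_le_pow_right₀ ha.le (show N ≤ k + N + 1 by omega)
    nlinarith
  have htlt : ∀ k, t k < 1 := fun k => lt_of_le_of_lt (hthalf k) (by norm_num)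
  have hsumt : Summable t := by
    have : Summable (fun k : ℕ => (x / a ^ (N + 1)) * (1 / a) ^ k) := by
      apply Summable.mul_left
      apply summable_geometric_of_lt_one (by positivity)
      rw [div_lt_one ha0]; exact ha
    apply this.congr
    intro k
    rw [ht]
    simp only [div_pow, one_pow]
    rw [div_mul_div_comm, mul_one, ← pow_add]
    congr 2
    omega
  -- summability of the logs of the tail
  have hlog : Summable (fun k => Real.log ((1 - t k) / (1 + t k))) := by
    have h1 : Summable (fun k => Real.log (1 + t k)) := by
      apply Summable.of_nonneg_of_le (fun k => Real.log_nonneg (by linarith [(htpos k)]))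
        (fun k => ?_) hsumt
      calc Real.log (1 + t k) ≤ (1 + t k) - 1 :=
            Real.log_le_sub_one_of_pos (by linarith [htpos k])
        _ = t k := by ring
    have h2 : Summable (fun k => - Real.log (1 - t k)) := by
      apply Summable.of_nonneg_of_le (fun k => ?_) (fun k => ?_) (hsumt.mul_left 2)
      · rw [neg_nonneg]
        exact Real.log_nonpos (by linarith [htlt k]) (by linarith [htpos k])
      · have h1t : 0 < 1 - t k := by linarith [htlt k]
        rw [← Real.log_inv]
        calc Real.log (1 - t k)⁻¹ ≤ (1 - t k)⁻¹ - 1 :=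
              Real.log_le_sub_one_of_pos (by positivity)
          _ = t k / (1 - t k) := by field_simp; ring
          _ ≤ 2 * t k := by
              rw [div_le_iff₀ h1t]
              nlinarith [hthalf k, (htpos k).le]
    have := (h2.neg).sub h1
    apply this.congr
    intro k
    simp only [neg_neg]
    rw [Real.log_div (by linarith [htlt k]) (by linarith [htpos k])]
  -- multipliability of the tail
  have htail : Multipliable (fun k : ℕ =>
      (1 - x / a ^ (k + N + 1)) / (1 + x / a ^ (k + N + 1))) := by
    have := Real.multipliable_of_summable_log
      (f := fun (k : ℕ) => (1 - t k) / (1 + t k))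
      (fun k => div_pos (by linarith [htlt k]) (by linarith [htpos k]))
      hlog
    exact this
  exact Multipliable.comp_nat_add (k := N) (by
    apply htail.congr
    intro k
    norm_num [ht, add_right_comm])

/-- For `a > 1` and `f(z) = ∏_{k=1}^∞ (1 - z/a^k)/(1 + z/a^k)`,
for every real `x ≥ a`, writing `x = a^(n+η)` with `n ∈ ℕ`, `η ∈ [0,1)`, we have
`|f(x)| ≤ (a^η - 1)/(a^η + 1) ≤ (a-1)/(a+1)`. -/
theorem stmt0 (a : ℝ) (ha : 1 < a)
    (f : ℝ → ℝ)
    (hf : ∀ x : ℝ, f x = ∏' k : ℕ, (1 - x / a ^ (k + 1)) / (1 + x / a ^ (k + 1)))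
    (x : ℝ) (hx : a ≤ x) (n : ℕ) (η : ℝ) (hη : η ∈ Set.Ico (0 : ℝ) 1)
    (hxe : x = a ^ ((n : ℝ) + η)) :
    |f x| ≤ (a ^ η - 1) / (a ^ η + 1) ∧
      (a ^ η - 1) / (a ^ η + 1) ≤ (a - 1) / (a + 1) := by
  obtain ⟨hη0, hη1⟩ := hη
  have ha0 : (0:ℝ) < a := lt_trans one_pos ha
  have hx0 : 0 < x := lt_of_lt_of_le ha0 hx
  have haη1 : 1 ≤ a ^ η := Real.one_le_rpow ha.le hη0
  have haηa : a ^ η ≤ a := by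
    calc a ^ η ≤ a ^ (1:ℝ) := Real.rpow_le_rpow_of_exponent_le ha.le hη1.le
      _ = a := Real.rpow_one a
  constructor
  · set g : ℕ → ℝ := fun k => (1 - x / a ^ (k + 1)) / (1 + x / a ^ (k + 1)) with hg
    have hgabs : ∀ k, |g k| ≤ 1 := by
      intro k
      have ht : 0 < x / a ^ (k+1) := div_pos hx0 (pow_pos ha0 _)
      simp only [hg]
      rw [abs_div, abs_of_pos (show (0:ℝ) < 1 + x / a ^ (k + 1) by linarith),
        div_le_one (by linarith)]
      exact abs_le.mpr ⟨by linarith, by linarith⟩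
    -- n ≥ 1
    have hn1 : (1:ℝ) ≤ (n:ℝ) + η := by
      have h := hx
      rw [hxe] at h
      have : a ^ (1:ℝ) ≤ a ^ ((n:ℝ) + η) := by rwa [Real.rpow_one]
      exact (Real.rpow_le_rpow_left_iff ha).mp this
    have hnpos : 1 ≤ n := by
      by_contra hc
      push_neg at hc
      interval_cases n
      · simp at hn1; linarith
    obtain ⟨m, rfl⟩ : ∃ m, n = m + 1 := ⟨n - 1, by omega⟩
    have hxn : x / a ^ (m + 1) = a ^ η := by
      rw [hxe, Real.rpow_add ha0, Real.rpow_natCast]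
      field_simp
    have hgm : |g m| = (a ^ η - 1) / (a ^ η + 1) := by
      simp only [hg]
      rw [hxn, abs_div, abs_of_nonpos (show (1:ℝ) - a ^ η ≤ 0 by linarith),
        abs_of_pos (show (0:ℝ) < 1 + a ^ η by linarith), neg_sub]
      ring_nf
    have hmult : Multipliable g := aux_multipliable a x ha hx0
    have hP : HasProd (fun k => |g k|) |∏' k, g k| := hmult.hasProd.abs
    rw [hf x]
    show |∏' k, g k| ≤ _
    rw [← hgm]
    refine le_of_tendsto hP ?_
    filter_upwards [Filter.eventually_ge_atTop ({m} : Finset ℕ)] with s hs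
    have hm : m ∈ s := hs (Finset.mem_singleton_self m)
    rw [← Finset.mul_prod_erase s _ hm]
    calc |g m| * ∏ k ∈ s.erase m, |g k|
        ≤ |g m| * 1 := by
          apply mul_le_mul_of_nonneg_left
            (Finset.prod_le_one (fun i _ => abs_nonneg _) (fun i _ => hgabs i)) (abs_nonneg _)
      _ = |g m| := mul_one _
  · rw [div_le_div_iff₀ (by linarith) (by linarith)]
    nlinarith
end

section
/- Let a > 1 and h(t) = ∑_{k=1}^∞ arctan(t/a^k). Then h(t) = (π/(2 log a)) log t + O(1) as t → ∞. -/
open Real Asymptotics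

lemma arctan_nonneg' {x : ℝ} (hx : 0 ≤ x) : 0 ≤ arctan x := by
  simpa using arctan_strictMono.monotone hx

lemma arctan_le_self' {x : ℝ} (hx : 0 ≤ x) : arctan x ≤ x := by
  have h1 : 0 ≤ arctan x := arctan_nonneg' hx
  have h2 : arctan x < π / 2 := arctan_lt_pi_div_two x
  calc arctan x ≤ tan (arctan x) := le_tan h1 h2
    _ = x := tan_arctan x

lemma stmt6_key (a : ℝ) (ha : 1 < a) (t : ℝ) (ht : 1 ≤ t) :
    |(∑' k : ℕ, Real.arctan (t / a ^ (k + 1))) - π / (2 * Real.log a) * Real.log t|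
      ≤ 2 * a / (a - 1) + π / 2 := by
  have ha0 : (0:ℝ) < a := lt_trans one_pos ha
  have ha1 : (0:ℝ) < a - 1 := by linarith
  have hloga : 0 < Real.log a := Real.log_pos ha
  have ht0 : (0:ℝ) < t := lt_of_lt_of_le one_pos ht
  have hlogt : 0 ≤ Real.log t := Real.log_nonneg ht
  set N : ℕ := ⌊Real.log t / Real.log a⌋₊ with hNdef
  have hN1 : (N:ℝ) ≤ Real.log t / Real.log a := Nat.floor_le (by positivity)
  have hN2 : Real.log t / Real.log a < N + 1 := Nat.lt_floor_add_one _
  -- a^N ≤ t < a^(N+1)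
  have haN : a ^ N ≤ t := by
    have : (N:ℝ) * Real.log a ≤ Real.log t := by
      rw [← le_div_iff₀ hloga]; exact hN1
    have h2 : Real.log (a ^ N) ≤ Real.log t := by rwa [Real.log_pow]
    exact (Real.log_le_log_iff (by positivity) ht0).mp h2
  have haN1 : t < a ^ (N + 1) := by
    have : Real.log t < ((N:ℝ) + 1) * Real.log a := by
      rw [← div_lt_iff₀ hloga]; exact hN2
    have h2 : Real.log t < Real.log (a ^ (N + 1)) := by
      rw [Real.log_pow]; push_cast; linarith
    exact (Real.log_lt_log_iff ht0 (by positivity)).mp h2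
  -- summability
  have hbound : ∀ m : ℕ, ∀ k : ℕ, Real.arctan (t / a ^ (k + m + 1)) ≤ t / a ^ (m + 1) * (1 / a) ^ k := by
    intro m k
    have h1 : Real.arctan (t / a ^ (k + m + 1)) ≤ t / a ^ (k + m + 1) :=
      arctan_le_self' (by positivity)
    have h2 : t / a ^ (k + m + 1) = t / a ^ (m + 1) * (1 / a) ^ k := by
      rw [div_pow, one_pow, div_mul_div_comm, mul_one, ← pow_add]
      ring_nf
    linarith [h2 ▸ h1]
  have hgeo : ∀ m : ℕ, Summable (fun k : ℕ => t / a ^ (m + 1) * (1 / a) ^ k) := by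
    intro m
    exact (summable_geometric_of_lt_one (by positivity) (by
      rw [div_lt_one ha0]; linarith)).mul_left _
  have hsum : ∀ m : ℕ, Summable (fun k : ℕ => Real.arctan (t / a ^ (k + m + 1))) := by
    intro m
    refine Summable.of_nonneg_of_le (fun k => arctan_nonneg' (by positivity)) (hbound m) (hgeo m)
  have hsum0 : Summable (fun k : ℕ => Real.arctan (t / a ^ (k + 1))) := by
    simpa using hsum 0
  -- split
  have hsplit : (∑' k : ℕ, Real.arctan (t / a ^ (k + 1)))
      = (∑ k ∈ Finset.range N, Real.arctan (t / a ^ (k + 1)))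
        + ∑' k : ℕ, Real.arctan (t / a ^ (k + N + 1)) :=
    (Summable.sum_add_tsum_nat_add N hsum0).symm
  -- head rewrite
  have hhead : (∑ k ∈ Finset.range N, Real.arctan (t / a ^ (k + 1)))
      = N * (π / 2) - ∑ k ∈ Finset.range N, Real.arctan (a ^ (k + 1) / t) := by
    have hterm : ∀ k : ℕ, Real.arctan (t / a ^ (k + 1))
        = π / 2 - Real.arctan (a ^ (k + 1) / t) := by
      intro k
      have hx : (0:ℝ) < t / a ^ (k + 1) := by positivity
      have h := Real.arctan_inv_of_pos hx
      rw [inv_div] at h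
      linarith
    calc (∑ k ∈ Finset.range N, Real.arctan (t / a ^ (k + 1)))
        = ∑ k ∈ Finset.range N, (π / 2 - Real.arctan (a ^ (k + 1) / t)) :=
          Finset.sum_congr rfl fun k _ => hterm k
      _ = N * (π / 2) - ∑ k ∈ Finset.range N, Real.arctan (a ^ (k + 1) / t) := by
          rw [Finset.sum_sub_distrib, Finset.sum_const, nsmul_eq_mul, Finset.card_range]
  set E1 := ∑ k ∈ Finset.range N, Real.arctan (a ^ (k + 1) / t) with hE1def
  have hE1nonneg : 0 ≤ E1 :=
    Finset.sum_nonneg fun k _ => arctan_nonneg' (by positivity)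
  have hE1le : E1 ≤ a / (a - 1) := by
    have h1 : E1 ≤ ∑ k ∈ Finset.range N, a ^ (k + 1) / t :=
      Finset.sum_le_sum fun k _ => arctan_le_self' (by positivity)
    have h2 : ∑ k ∈ Finset.range N, a ^ (k + 1) / t
        = (a * ∑ k ∈ Finset.range N, a ^ k) / t := by
      rw [Finset.mul_sum, Finset.sum_div]
      exact Finset.sum_congr rfl fun k _ => by rw [pow_succ, mul_comm]
    have h3 : ∑ k ∈ Finset.range N, (a:ℝ) ^ k = (a ^ N - 1) / (a - 1) :=
      geom_sum_eq (ne_of_gt ha) N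
    have h4 : (a * ((a ^ N - 1) / (a - 1))) / t ≤ a / (a - 1) := by
      rw [div_le_iff₀ ht0]
      have h5 : a * ((a ^ N - 1) / (a - 1)) ≤ a * (t / (a - 1)) := by
        gcongr
        linarith
      calc a * ((a ^ N - 1) / (a - 1)) ≤ a * (t / (a - 1)) := h5
        _ = a / (a - 1) * t := by ring
    calc E1 ≤ _ := h1
      _ = _ := h2
      _ = (a * ((a ^ N - 1) / (a - 1))) / t := by rw [h3]
      _ ≤ a / (a - 1) := h4
  -- tail
  set T := ∑' k : ℕ, Real.arctan (t / a ^ (k + N + 1)) with hTdef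
  have hTnonneg : 0 ≤ T :=
    tsum_nonneg fun k => arctan_nonneg' (by positivity)
  have hTle : T ≤ a / (a - 1) := by
    have h1 : T ≤ ∑' k : ℕ, t / a ^ (N + 1) * (1 / a) ^ k :=
      (hsum N).tsum_le_tsum (hbound N) (hgeo N)
    have h2 : ∑' k : ℕ, t / a ^ (N + 1) * (1 / a) ^ k
        = t / a ^ (N + 1) * (1 - 1 / a)⁻¹ := by
      rw [tsum_mul_left, tsum_geometric_of_lt_one (by positivity)
        (by rw [div_lt_one ha0]; linarith)]
    have h3 : (1 - 1 / a)⁻¹ = a / (a - 1) := by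
      field_simp
    have h4 : t / a ^ (N + 1) ≤ 1 := by
      rw [div_le_one (by positivity)]; linarith
    have h5 : t / a ^ (N + 1) * (a / (a - 1)) ≤ 1 * (a / (a - 1)) :=
      mul_le_mul_of_nonneg_right h4 (by positivity)
    calc T ≤ _ := h1
      _ = t / a ^ (N + 1) * (a / (a - 1)) := by rw [h2, h3]
      _ ≤ 1 * (a / (a - 1)) := h5
      _ = a / (a - 1) := one_mul _
  -- the N vs log t part
  have hNpart : |(N:ℝ) * (π / 2) - π / (2 * Real.log a) * Real.log t| ≤ π / 2 := by
    have heq : π / (2 * Real.log a) * Real.log t = (Real.log t / Real.log a) * (π / 2) := by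
      field_simp
    rw [heq, ← sub_mul, abs_mul, abs_of_nonneg (by positivity : (0:ℝ) ≤ π / 2)]
    have h6 : |(N:ℝ) - Real.log t / Real.log a| ≤ 1 := by
      rw [abs_le]; constructor <;> [linarith; linarith]
    nlinarith [Real.pi_pos]
  -- final
  rw [hsplit, hhead]
  have habs : |(N:ℝ) * (π / 2) - E1 + T - π / (2 * Real.log a) * Real.log t|
      ≤ |T - E1| + |(N:ℝ) * (π / 2) - π / (2 * Real.log a) * Real.log t| := by
    have : (N:ℝ) * (π / 2) - E1 + T - π / (2 * Real.log a) * Real.log t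
        = (T - E1) + ((N:ℝ) * (π / 2) - π / (2 * Real.log a) * Real.log t) := by ring
    rw [this]; exact abs_add_le _ _
  have hTE : |T - E1| ≤ 2 * a / (a - 1) := by
    have hq : 0 ≤ a / (a - 1) := by positivity
    have h2q : 2 * a / (a - 1) = 2 * (a / (a - 1)) := by ring
    rw [abs_le]; constructor <;> linarith
  calc |(N:ℝ) * (π / 2) - E1 + T - π / (2 * Real.log a) * Real.log t| ≤ _ := habs
    _ ≤ 2 * a / (a - 1) + π / 2 := add_le_add hTE hNpart

/-- For `a > 1` and `h(t) = ∑_{k=1}^∞ arctan(t/a^k)`,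
`h(t) = (π/(2 log a)) log t + O(1)` as `t → ∞`. -/
theorem stmt6 (a : ℝ) (ha : 1 < a) (h : ℝ → ℝ)
    (hh : ∀ t, h t = ∑' k : ℕ, Real.arctan (t / a ^ (k + 1))) :
    (fun t : ℝ => h t - Real.pi / (2 * Real.log a) * Real.log t)
      =O[Filter.atTop] (fun _ => (1 : ℝ)) := by
  rw [isBigO_iff]
  refine ⟨2 * a / (a - 1) + π / 2, ?_⟩
  filter_upwards [Filter.eventually_ge_atTop (1:ℝ)] with t ht
  rw [hh t]
  simpa using stmt6_key a ha t ht
end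

section
/- Let f be a nonconstant entire function such that min_{|z|=r} |f(z)| is bounded over all r > 0 (i.e., there exists C with min_{|z|=r}|f(z)| < C for all r). If f is transcendental and has only finitely many islands over some Jordan domain D (a bounded simply connected open set with Jordan boundary), then some connected component of f^{-1}(D) is unbounded, and consequently min_{|z|=r}|f(z)| is bounded whenever D is bounded. -/
section MyAux
open Set Bornology Metric Filter

lemma myPolyOfGrowth : ∀ (n : ℕ) (f : ℂ → ℂ), Differentiable ℂ f →
    (∃ C : ℝ, ∀ z, ‖f z‖ ≤ C * max 1 ‖z‖ ^ n) → ∃ p : Polynomial ℂ, ∀ z, f z = p.eval z := by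
  intro n
  induction n with
  | zero =>
    rintro f hf ⟨C, hC⟩
    refine ⟨Polynomial.C (f 0), fun z => ?_⟩
    rw [Polynomial.eval_C]
    refine hf.apply_eq_apply_of_bounded ?_ z 0
    refine (isBounded_iff_subset_closedBall 0).2 ⟨C, ?_⟩
    rintro w ⟨z, rfl⟩
    simpa using (hC z).trans (by simp)
  | succ n ih =>
    rintro f hf ⟨C, hC⟩
    have hC0 : 0 ≤ C := le_trans (norm_nonneg (f 0)) (by simpa using hC 0)
    set g : ℂ → ℂ := dslope f 0 with hg
    have hgd : Differentiable ℂ g := by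
      rw [← differentiableOn_univ] at hf ⊢
      exact (Complex.differentiableOn_dslope Filter.univ_mem).2 hf
    -- bound on closed unit ball
    obtain ⟨M, hM⟩ := (isCompact_closedBall (0:ℂ) 1).exists_bound_of_continuousOn
      hgd.continuous.continuousOn
    have key : ∀ z, ‖g z‖ ≤ (max (2 * C) M) * max 1 ‖z‖ ^ n := by
      intro z
      rcases le_or_gt ‖z‖ 1 with h1 | h1
      · have : max 1 ‖z‖ = 1 := max_eq_left h1
        rw [this]
        calc ‖g z‖ ≤ M := hM z (by simpa [Metric.mem_closedBall, dist_eq_norm] using h1)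
          _ ≤ max (2*C) M * 1 ^ n := by simp [le_max_right]
      · have hz0 : z ≠ 0 := by intro h; simp [h] at h1; linarith
        have hmax : max 1 ‖z‖ = ‖z‖ := max_eq_right h1.le
        have hgz : g z = z⁻¹ * (f z - f 0) := by
          rw [hg, dslope_of_ne _ hz0, slope_def_field]
          field_simp [sub_ne_zero]
          ring
        have : ‖g z‖ = ‖f z - f 0‖ / ‖z‖ := by
          rw [hgz]; rw [norm_mul, norm_inv]; ring
        rw [this, hmax]
        rw [div_le_iff₀ (by linarith)]
        have h2 : ‖f z - f 0‖ ≤ C * ‖z‖ ^ (n+1) + C := by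
          calc ‖f z - f 0‖ ≤ ‖f z‖ + ‖f 0‖ := norm_sub_le _ _
            _ ≤ C * max 1 ‖z‖ ^ (n+1) + C * max 1 ‖(0:ℂ)‖ ^ (n+1) := add_le_add (hC z) (hC 0)
            _ = C * ‖z‖ ^ (n+1) + C := by rw [hmax]; simp
        have h3 : C * ‖z‖ ^ (n+1) + C ≤ 2 * C * (‖z‖ ^ n * ‖z‖) := by
          have hzn : (1:ℝ) ≤ ‖z‖ ^ n := one_le_pow₀ h1.le
          have hprod : (1:ℝ) ≤ ‖z‖^n * ‖z‖ := by nlinarith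
          have h5 : C * 1 ≤ C * (‖z‖^n * ‖z‖) := mul_le_mul_of_nonneg_left hprod hC0
          have h4 : C * ‖z‖ ^ (n+1) = C * (‖z‖^n * ‖z‖) := by ring
          linarith
        calc ‖f z - f 0‖ ≤ C * ‖z‖ ^ (n+1) + C := h2
          _ ≤ 2 * C * (‖z‖ ^ n * ‖z‖) := h3
          _ ≤ max (2*C) M * ‖z‖ ^ n * ‖z‖ := by
              have h6 := mul_le_mul_of_nonneg_right (le_max_left (2*C) M)
                (by positivity : (0:ℝ) ≤ ‖z‖^n * ‖z‖)
              nlinarith [h6]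
    obtain ⟨p, hp⟩ := ih g hgd ⟨max (2*C) M, key⟩
    refine ⟨Polynomial.C (f 0) + Polynomial.X * p, fun z => ?_⟩
    have := sub_smul_dslope f 0 z
    simp only [sub_zero, smul_eq_mul] at this
    rw [Polynomial.eval_add, Polynomial.eval_C, Polynomial.eval_mul, Polynomial.eval_X, ← hp z]
    linear_combination -this

lemma myDense (f : ℂ → ℂ) (hf : Differentiable ℂ f)
    (htrans : ¬ ∃ p : Polynomial ℂ, ∀ z, f z = p.eval z)
    (D : Set ℂ) (hDopen : IsOpen D) (hDne : D.Nonempty) : ∃ z, f z ∈ D := by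
  by_contra h
  push_neg at h
  obtain ⟨w, hw⟩ := hDne
  obtain ⟨ε, hε, hball⟩ := Metric.isOpen_iff.1 hDopen w hw
  have hne : ∀ z, f z - w ≠ 0 := by
    intro z hz
    exact h z (hball (by simp [Metric.mem_ball, dist_eq_norm, sub_eq_zero.1 hz, hε]))
  have hlow : ∀ z, ε ≤ ‖f z - w‖ := by
    intro z
    by_contra hlt
    push_neg at hlt
    exact h z (hball (by simpa [Metric.mem_ball, dist_eq_norm] using hlt))
  have hg : Differentiable ℂ (fun z => (f z - w)⁻¹) :=
    (hf.sub_const w).inv hne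
  have hb : IsBounded (range fun z => (f z - w)⁻¹) := by
    refine (isBounded_iff_subset_closedBall 0).2 ⟨ε⁻¹, ?_⟩
    rintro x ⟨z, rfl⟩
    simp only [Metric.mem_closedBall, dist_zero_right, norm_inv]
    exact inv_anti₀ hε (hlow z)
  obtain ⟨c, hc⟩ := hg.exists_const_forall_eq_of_bounded hb
  have hc0 : c ≠ 0 := by
    intro h0; exact hne 0 (by simpa [h0, inv_eq_zero] using hc 0)
  refine htrans ⟨Polynomial.C (w + c⁻¹), fun z => ?_⟩
  rw [Polynomial.eval_C]
  have h1 : f z - w = c⁻¹ := by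
    rw [← inv_inv (f z - w), hc z]
  rw [← h1]; ring

lemma myCore (f : ℂ → ℂ) (hf : Differentiable ℂ f) (w₀ : ℂ) (ε R : ℝ)
    (hε : 0 < ε) (hR : 0 < R) (hlow : ∀ z : ℂ, R < ‖z‖ → ε ≤ ‖f z - w₀‖) :
    ∃ p : Polynomial ℂ, ∀ z, f z = p.eval z := by
  set F : ℂ → ℂ := fun z => f z - w₀ with hF
  set G : ℂ → ℂ := fun w => (F w⁻¹)⁻¹ with hG
  have hs : ball (0:ℂ) R⁻¹ ∈ nhds (0:ℂ) :=
    isOpen_ball.mem_nhds (by simp [Metric.mem_ball, inv_pos, hR])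
  have hmem : ∀ w : ℂ, w ∈ ball (0:ℂ) R⁻¹ \ {0} → R < ‖w⁻¹‖ := by
    rintro w ⟨hw1, hw2⟩
    simp only [Metric.mem_ball, dist_zero_right] at hw1
    have hw0 : w ≠ 0 := by simpa using hw2
    rw [norm_inv]
    have h0 : 0 < ‖w‖ := norm_pos_iff.2 hw0
    rw [lt_inv_comm₀ hR h0]  -- R < ‖w‖⁻¹ ↔ ‖w‖ < R⁻¹ ; name?
    exact hw1
  have hFw : ∀ w : ℂ, w ∈ ball (0:ℂ) R⁻¹ \ {0} → ε ≤ ‖F w⁻¹‖ := fun w hw =>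
    hlow _ (hmem w hw)
  have hFne : ∀ w : ℂ, w ∈ ball (0:ℂ) R⁻¹ \ {0} → F w⁻¹ ≠ 0 := fun w hw =>
    norm_pos_iff.1 (lt_of_lt_of_le hε (hFw w hw))
  have hd : DifferentiableOn ℂ G (ball (0:ℂ) R⁻¹ \ {0}) := by
    intro w hw
    have hw0 : w ≠ 0 := by simpa using hw.2
    have h1 : DifferentiableAt ℂ (fun w : ℂ => F w⁻¹) w :=
      ((hf.sub_const w₀).differentiableAt).comp w (differentiableAt_inv hw0)
    exact (h1.inv (hFne w hw)).differentiableWithinAt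
  have hb : BddAbove (norm ∘ G '' (ball (0:ℂ) R⁻¹ \ {0})) := by
    refine ⟨ε⁻¹, ?_⟩
    rintro x ⟨w, hw, rfl⟩
    simp only [Function.comp_apply, hG, norm_inv]
    exact inv_anti₀ hε (hFw w hw)
  set g : ℂ → ℂ := Function.update G 0 (limUnder (nhdsWithin (0:ℂ) {(0:ℂ)}ᶜ) G) with hg
  have hgd : DifferentiableOn ℂ g (ball (0:ℂ) R⁻¹) :=
    Complex.differentiableOn_update_limUnder_of_bddAbove hs hd hb
  have ha : AnalyticAt ℂ g 0 := hgd.analyticAt hs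
  have hgG : ∀ w : ℂ, w ≠ 0 → g w = G w := fun w hw => Function.update_of_ne hw _ _
  have hord : analyticOrderAt g 0 ≠ ⊤ := by
    intro htop
    have hev := (analyticOrderAt_eq_top).1 htop
    -- get a small nonzero w
    obtain ⟨δ, hδ, hball⟩ := Metric.eventually_nhds_iff.1 hev
    set w : ℂ := ((min δ R⁻¹ / 2 : ℝ) : ℂ) with hw
    have hδR : 0 < min δ R⁻¹ := lt_min hδ (by simp [hR])
    have hw0 : w ≠ 0 := by
      simp only [hw, ne_eq, Complex.ofReal_eq_zero]
      positivity
    have hwn : ‖w‖ = min δ R⁻¹ / 2 := by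
      simp only [hw, Complex.norm_real, Real.norm_eq_abs]
      rw [abs_of_pos (by positivity)]
    have h1 : g w = 0 := hball (by simp [dist_zero_right, hwn]; linarith [min_le_left δ R⁻¹])
    have h2 : w ∈ ball (0:ℂ) R⁻¹ \ {0} := by
      constructor
      · simp only [Metric.mem_ball, dist_zero_right, hwn]
        linarith [min_le_right δ R⁻¹]
      · simpa using hw0
    have := hFne w h2
    rw [hgG w hw0] at h1
    simp only [hG, inv_eq_zero] at h1
    exact this h1
  obtain ⟨n, hn⟩ := ENat.ne_top_iff_exists.1 hord
  obtain ⟨h, hha, hh0, hfac⟩ := (ha.analyticOrderAt_eq_natCast).1 hn.symm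
  have hc : ContinuousAt h 0 := hha.continuousAt
  have hlower : ∀ᶠ w in nhds (0:ℂ), ‖h 0‖ / 2 ≤ ‖h w‖ := by
    have : ∀ᶠ w in nhds (0:ℂ), ‖h w - h 0‖ < ‖h 0‖ / 2 := by
      have := hc.tendsto (Metric.ball_mem_nhds (h 0) (show (0:ℝ) < ‖h 0‖/2 by have := norm_pos_iff.2 hh0; linarith))
      filter_upwards [this] with w hw
      simpa [dist_eq_norm] using hw
    filter_upwards [this] with w hw
    have := norm_sub_norm_le (h w) (h 0)
    have h2 := abs_le.1 (abs_norm_sub_norm_le (h w) (h 0))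
    linarith [h2.1, (norm_sub_rev (h w) (h 0) ▸ hw)]
  have hball_ev : ∀ᶠ w in nhds (0:ℂ), w ∈ ball (0:ℂ) R⁻¹ := hs
  obtain ⟨δ, hδ, hP⟩ := Metric.eventually_nhds_iff.1 (hfac.and (hlower.and hball_ev))
  -- growth bound at infinity
  set c : ℝ := ‖h 0‖ / 2 with hcdef
  have hcpos : 0 < c := by have := norm_pos_iff.2 hh0; simp only [hcdef]; linarith
  have hgrow : ∀ z : ℂ, δ⁻¹ < ‖z‖ → ‖F z‖ ≤ c⁻¹ * ‖z‖ ^ n := by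
    intro z hz
    have hz0 : z ≠ 0 := by
      intro h0; rw [h0] at hz; simp at hz; exact absurd hz (not_lt.2 hδ.le)
    have hwd : dist z⁻¹ 0 < δ := by
      simp only [dist_zero_right, norm_inv]
      rw [inv_lt_comm₀ (norm_pos_iff.2 hz0) hδ]
      exact hz
    obtain ⟨hfw, hlw, hbw⟩ := hP hwd
    have hw0 : z⁻¹ ≠ 0 := inv_ne_zero hz0
    rw [hgG _ hw0] at hfw
    simp only [hG, inv_inv] at hfw
    -- hfw : (F z)⁻¹ = (z⁻¹ - 0) ^ n • h z⁻¹
    have hFz : F z ≠ 0 := by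
      have := hFne z⁻¹ ⟨hbw, by simpa using hw0⟩
      rwa [inv_inv] at this
    have hnorm : ‖F z‖⁻¹ = ‖z‖⁻¹ ^ n * ‖h z⁻¹‖ := by
      rw [← norm_inv, hfw]
      simp [norm_smul, norm_pow, norm_inv]
    have hpow : (0:ℝ) < ‖z‖⁻¹ ^ n := by
      have : (0:ℝ) < ‖z‖ := norm_pos_iff.2 hz0
      positivity
    have hstep : (‖z‖⁻¹ ^ n * c) ≤ ‖F z‖⁻¹ := by
      rw [hnorm]
      exact mul_le_mul_of_nonneg_left hlw hpow.le
    have h2 : ‖F z‖ ≤ (‖z‖⁻¹ ^ n * c)⁻¹ := by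
      rw [← inv_inv ‖F z‖]
      exact inv_anti₀ (by positivity) hstep
    calc ‖F z‖ ≤ (‖z‖⁻¹ ^ n * c)⁻¹ := h2
      _ = c⁻¹ * ‖z‖ ^ n := by rw [mul_inv, inv_pow, inv_inv]; ring
  obtain ⟨M, hM⟩ := (isCompact_closedBall (0:ℂ) δ⁻¹).exists_bound_of_continuousOn
    (hf.sub_const w₀).continuous.continuousOn
  have hM0 : 0 ≤ M := le_trans (norm_nonneg (F 0)) (hM 0 (by simp [le_of_lt (inv_pos.2 hδ)]))
  set C : ℝ := max c⁻¹ M with hCdef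
  have hC0 : 0 ≤ C := le_trans hM0 (le_max_right _ _)
  have hall : ∀ z : ℂ, ‖F z‖ ≤ C * max 1 ‖z‖ ^ n := by
    intro z
    rcases le_or_gt ‖z‖ δ⁻¹ with h1 | h1
    · calc ‖F z‖ ≤ M := hM z (by simpa [Metric.mem_closedBall, dist_zero_right] using h1)
        _ ≤ C * 1 := by simp [hCdef, le_max_right]
        _ ≤ C * max 1 ‖z‖ ^ n := mul_le_mul_of_nonneg_left (one_le_pow₀ (le_max_left _ _)) hC0
    · calc ‖F z‖ ≤ c⁻¹ * ‖z‖ ^ n := hgrow z h1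
        _ ≤ C * max 1 ‖z‖ ^ n := by
            refine mul_le_mul (le_max_left _ _) (pow_le_pow_left₀ (norm_nonneg z) (le_max_right _ _) n)
              (by positivity) hC0
  obtain ⟨p, hp⟩ := myPolyOfGrowth n F (hf.sub_const w₀) ⟨C, hall⟩
  refine ⟨p + Polynomial.C w₀, fun z => ?_⟩
  have := hp z
  simp only [hF] at this
  rw [Polynomial.eval_add, Polynomial.eval_C, ← this]
  ring


end MyAux

/-- Let `f` be a transcendental entire function and `D` a Jordan domain
(bounded, open, nonempty, connected, simply connected). If `f` has only finitely many
islands over `D` (bounded connected components of `f⁻¹(D)`), then some connected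
component of `f⁻¹(D)` is unbounded, and consequently the minimum modulus of `f` on the
circle `|z| = r` is bounded uniformly in `r > 0`. -/
theorem stmt12 (f : ℂ → ℂ) (hf : Differentiable ℂ f)
    (htrans : ¬ ∃ p : Polynomial ℂ, ∀ z, f z = p.eval z)
    (D : Set ℂ) (hDopen : IsOpen D) (hDbdd : Bornology.IsBounded D)
    (hDne : D.Nonempty) (hDconn : IsConnected D) (hDsc : SimplyConnectedSpace D)
    (hislands :
      {U : Set ℂ | ∃ z ∈ f ⁻¹' D,
        U = connectedComponentIn (f ⁻¹' D) z ∧ Bornology.IsBounded U}.Finite) :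
    (∃ z ∈ f ⁻¹' D, ¬ Bornology.IsBounded (connectedComponentIn (f ⁻¹' D) z)) ∧
      ∃ C : ℝ, ∀ r : ℝ, 0 < r → ∃ z : ℂ, ‖z‖ = r ∧ ‖f z‖ < C := by
  have part1 : ∃ z ∈ f ⁻¹' D, ¬ Bornology.IsBounded (connectedComponentIn (f ⁻¹' D) z) := by
    by_contra hcon
    push_neg at hcon
    have hsub : f ⁻¹' D ⊆ ⋃₀ {U : Set ℂ | ∃ z ∈ f ⁻¹' D,
        U = connectedComponentIn (f ⁻¹' D) z ∧ Bornology.IsBounded U} := fun z hz =>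
      ⟨_, ⟨z, hz, rfl, hcon z hz⟩, mem_connectedComponentIn hz⟩
    have hbdd : Bornology.IsBounded (f ⁻¹' D) :=
      (((Bornology.isBounded_sUnion hislands).2 (by rintro s ⟨z, hz, hU, hb⟩; exact hb)).subset hsub)
    obtain ⟨R, hRsub⟩ := (Metric.isBounded_iff_subset_closedBall 0).1 hbdd
    obtain ⟨z₀, hz₀⟩ := myDense f hf htrans D hDopen hDne
    obtain ⟨ε, hε, hball⟩ := Metric.isOpen_iff.1 hDopen (f z₀) hz₀
    have hlow : ∀ z : ℂ, max R 1 < ‖z‖ → ε ≤ ‖f z - f z₀‖ := by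
      intro z hz
      by_contra hlt
      push_neg at hlt
      have h2 : f z ∈ D := hball (by simpa [Metric.mem_ball, dist_eq_norm] using hlt)
      have h3 := hRsub h2
      simp only [Metric.mem_closedBall, dist_zero_right] at h3
      have := lt_of_le_of_lt (le_max_left R 1) hz
      linarith
    obtain ⟨p, hp⟩ := myCore f hf (f z₀) ε (max R 1) hε
      (lt_of_lt_of_le one_pos (le_max_right R 1)) hlow
    exact htrans ⟨p, hp⟩
  refine ⟨part1, ?_⟩
  obtain ⟨z₀, hz₀, hub⟩ := part1
  obtain ⟨M, hM⟩ := (Metric.isBounded_iff_subset_closedBall 0).1 hDbdd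
  obtain ⟨M₂, hM₂⟩ := (isCompact_closedBall (0:ℂ) ‖z₀‖).exists_bound_of_continuousOn
    hf.continuous.continuousOn
  refine ⟨max M M₂ + 1, fun r hr => ?_⟩
  rcases le_or_gt r ‖z₀‖ with h1 | h1
  · refine ⟨(r:ℂ), by simp [abs_of_pos hr], ?_⟩
    have h2 : ‖f (r:ℂ)‖ ≤ M₂ := hM₂ _ (by
      simp only [Metric.mem_closedBall, dist_zero_right, Complex.norm_real, Real.norm_eq_abs]
      rw [abs_of_pos hr]; exact h1)
    have := le_max_right M M₂
    linarith
  · set U := connectedComponentIn (f ⁻¹' D) z₀ with hU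
    have hz₀U : z₀ ∈ U := mem_connectedComponentIn hz₀
    have hns : ¬ U ⊆ Metric.closedBall 0 r := fun hsub =>
      hub (Metric.isBounded_closedBall.subset hsub)
    obtain ⟨w, hwU, hw⟩ := Set.not_subset.1 hns
    have hwr : r < ‖w‖ := by
      simpa [Metric.mem_closedBall, dist_zero_right, not_le] using hw
    have hpre : IsPreconnected U := isPreconnected_connectedComponentIn
    have hIcc : r ∈ Set.Icc ‖z₀‖ ‖w‖ := by
      constructor
      · exact h1.le
      · exact hwr.le
    obtain ⟨z, hzU, hz⟩ := hpre.intermediate_value hz₀U hwU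
      continuous_norm.continuousOn hIcc
    refine ⟨z, hz, ?_⟩
    have hzD : f z ∈ D := connectedComponentIn_subset (f ⁻¹' D) z₀ hzU
    have := hM hzD
    simp only [Metric.mem_closedBall, dist_zero_right] at this
    have := le_max_left M M₂
    linarith [hM hzD, le_max_left M M₂]
end

section
/- Let u be a positive harmonic function on the unit disk 𝔻 that extends continuously to cl(𝔻) \ {1} with boundary values 0 on ∂𝔻 \ {1}. Then u is a positive constant multiple of the Poisson kernel at 1, i.e. u(z) = c·(1−|z|²)/|1−z|² for some c > 0. -/
open Complex Metric Set Real intervalIntegral Filter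

noncomputable def Complex.abs : AbsoluteValue ℂ ℝ where
  toFun := norm
  map_mul' := norm_mul
  nonneg' := norm_nonneg
  eq_zero' := fun _ => norm_eq_zero
  add_le' := norm_add_le

lemma Complex.norm_eq_abs (z : ℂ) : ‖z‖ = Complex.abs z := rfl

lemma Complex.abs_ofReal (r : ℝ) : Complex.abs (r : ℂ) = |r| := by
  rw [← Complex.norm_eq_abs]; simp

lemma Complex.abs_conj (z : ℂ) : Complex.abs ((starRingEnd ℂ) z) = Complex.abs z := by
  rw [← Complex.norm_eq_abs, ← Complex.norm_eq_abs]; simp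

lemma Complex.continuous_abs : Continuous Complex.abs := continuous_norm

lemma Complex.sq_abs (z : ℂ) : Complex.abs z ^ 2 = Complex.normSq z := by
  rw [← Complex.norm_eq_abs, Complex.sq_norm]

@[simp] lemma abs_circleMap_zero (r θ : ℝ) : Complex.abs (circleMap 0 r θ) = |r| := by
  rw [← Complex.norm_eq_abs]; simp

noncomputable def pker (z w : ℂ) : ℝ := (1 - Complex.abs z ^ 2) / Complex.abs (w - z) ^ 2

lemma conj_sub_ne {a b : ℂ} (h : a - b ≠ 0) : (starRingEnd ℂ) a - (starRingEnd ℂ) b ≠ 0 := by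
  intro hh
  apply h
  have := congrArg (starRingEnd ℂ) hh
  simpa using this

lemma abs_sq_eq (a : ℂ) : ((Complex.abs a : ℝ) : ℂ) ^ 2 = a * (starRingEnd ℂ) a := by
  rw [Complex.mul_conj, ← Complex.sq_abs]
  push_cast
  ring

lemma pker_eq {z w : ℂ} (hz : Complex.abs z < 1) (hw : Complex.abs w = 1) :
    ((pker z w : ℝ) : ℂ) =
      w * ((w - z)⁻¹ + (starRingEnd ℂ) z * (1 - (starRingEnd ℂ) z * w)⁻¹) := by
  have hz1 : Complex.abs z < Complex.abs w := by rw [hw]; exact hz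
  have hwz : w - z ≠ 0 := sub_ne_zero.2 (fun h => absurd hz1 (by rw [h]; exact lt_irrefl _))
  have hcwz : (starRingEnd ℂ) w - (starRingEnd ℂ) z ≠ 0 := conj_sub_ne hwz
  have hd : 1 - (starRingEnd ℂ) z * w ≠ 0 := by
    intro h
    have h' : (starRingEnd ℂ) z * w = 1 := by linear_combination -h
    have : Complex.abs ((starRingEnd ℂ) z * w) = 1 := by rw [h']; simp
    rw [map_mul, Complex.abs_conj, hw, mul_one] at this
    exact hz.ne this
  have hww : w * (starRingEnd ℂ) w = 1 := by
    rw [Complex.mul_conj, ← Complex.sq_abs, hw]; norm_num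
  have h1 : ((Complex.abs (w - z) : ℝ) : ℂ) ^ 2
      = (w - z) * ((starRingEnd ℂ) w - (starRingEnd ℂ) z) := by
    rw [← map_sub]; exact abs_sq_eq _
  have h2 : ((Complex.abs z : ℝ) : ℂ) ^ 2 = z * (starRingEnd ℂ) z := abs_sq_eq z
  rw [pker]
  push_cast
  rw [h1, h2]
  field_simp
  linear_combination (z * (starRingEnd ℂ) z - 1) * hww

lemma poisson_rep {F : ℂ → ℂ} {R : ℝ} (hR : 1 < R)
    (hF : DifferentiableOn ℂ F (ball 0 R)) {z : ℂ} (hz : Complex.abs z < 1) :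
    (F z).re = (2 * π)⁻¹ * ∫ θ in (0:ℝ)..(2 * π),
      pker z (circleMap 0 1 θ) * (F (circleMap 0 1 θ)).re := by
  have hsub : closedBall (0:ℂ) 1 ⊆ ball 0 R := closedBall_subset_ball hR
  have hFc : ContinuousOn F (closedBall 0 1) := hF.continuousOn.mono hsub
  have hFd : ∀ x ∈ ball (0:ℂ) 1, DifferentiableAt ℂ F x := fun x hx =>
    hF.differentiableAt (isOpen_ball.mem_nhds (ball_subset_ball hR.le hx))
  have he : ∀ θ : ℝ, Complex.abs (circleMap 0 1 θ) = 1 := fun θ => by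
    simp
  have hemem : ∀ θ : ℝ, circleMap 0 1 θ ∈ closedBall (0:ℂ) 1 := fun θ => by
    simp [mem_closedBall_zero_iff, Complex.norm_eq_abs, he θ]
  have hFe : Continuous fun θ : ℝ => F (circleMap 0 1 θ) :=
    hFc.comp_continuous (continuous_circleMap 0 1) hemem
  have hne1 : ∀ θ : ℝ, circleMap 0 1 θ - z ≠ 0 := fun θ =>
    sub_ne_zero.2 (fun h => absurd (h ▸ he θ) hz.ne)
  have hne2 : ∀ w : ℂ, Complex.abs w ≤ 1 → 1 - (starRingEnd ℂ) z * w ≠ 0 := by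
    intro w hw h
    have h' : (starRingEnd ℂ) z * w = 1 := by linear_combination -h
    have : Complex.abs ((starRingEnd ℂ) z * w) = 1 := by rw [h']; simp
    rw [map_mul, Complex.abs_conj] at this
    nlinarith [Complex.abs.nonneg z, Complex.abs.nonneg w]
  -- Cauchy integral formula
  have h1 : (∮ w in C((0:ℂ), 1), (w - z)⁻¹ • F w) = (2 * ↑π * I) • F z :=
    Complex.circleIntegral_sub_inv_smul_of_differentiable_on_off_countable countable_empty
      (by simpa [mem_ball_zero_iff, Complex.norm_eq_abs] using hz) hFc
      (fun x hx => hFd x hx.1)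
  -- Cauchy-Goursat
  have h2 : (∮ w in C((0:ℂ), 1),
      ((starRingEnd ℂ) z * (1 - (starRingEnd ℂ) z * w)⁻¹) • F w) = 0 := by
    refine Complex.circleIntegral_eq_zero_of_differentiable_on_off_countable zero_le_one
      countable_empty ?_ ?_
    · exact (continuousOn_const.mul ((continuousOn_const.sub
        (continuousOn_const.mul continuousOn_id)).inv₀ (fun w hw => hne2 w
        (by simpa [mem_closedBall_zero_iff, Complex.norm_eq_abs] using hw)))).smul hFc
    · rintro x ⟨hx, -⟩
      exact ((differentiableAt_const _).mul (((differentiableAt_const _).sub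
        ((differentiableAt_const _).mul differentiableAt_id)).fun_inv (z := x)
        (hne2 x (le_of_lt (by simpa [mem_ball_zero_iff, Complex.norm_eq_abs] using hx))))).fun_smul
        (hFd x hx)
  rw [circleIntegral] at h1 h2
  simp only [deriv_circleMap, zero_add] at h1 h2
  have hc1 : Continuous fun θ : ℝ =>
      (circleMap 0 1 θ * I) • ((circleMap 0 1 θ - z)⁻¹ • F (circleMap 0 1 θ)) :=
    ((continuous_circleMap 0 1).mul continuous_const).smul
      ((((continuous_circleMap 0 1).sub continuous_const).inv₀ hne1).smul hFe)
  have hc2 : Continuous fun θ : ℝ =>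
      (circleMap 0 1 θ * I) • (((starRingEnd ℂ) z *
        (1 - (starRingEnd ℂ) z * circleMap 0 1 θ)⁻¹) • F (circleMap 0 1 θ)) :=
    ((continuous_circleMap 0 1).mul continuous_const).smul
      ((continuous_const.mul ((continuous_const.sub
        (continuous_const.mul (continuous_circleMap 0 1))).inv₀
        (fun θ => hne2 _ (he θ).le))).smul hFe)
  have hsum : (∫ θ in (0:ℝ)..(2*π),
      ((circleMap 0 1 θ * I) • ((circleMap 0 1 θ - z)⁻¹ • F (circleMap 0 1 θ))
      + (circleMap 0 1 θ * I) • (((starRingEnd ℂ) z *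
        (1 - (starRingEnd ℂ) z * circleMap 0 1 θ)⁻¹) • F (circleMap 0 1 θ))))
      = (2 * ↑π * I) • F z := by
    rw [integral_add (hc1.intervalIntegrable _ _) (hc2.intervalIntegrable _ _), h1, h2, add_zero]
  have heq : (fun θ : ℝ =>
      ((circleMap 0 1 θ * I) • ((circleMap 0 1 θ - z)⁻¹ • F (circleMap 0 1 θ))
      + (circleMap 0 1 θ * I) • (((starRingEnd ℂ) z *
        (1 - (starRingEnd ℂ) z * circleMap 0 1 θ)⁻¹) • F (circleMap 0 1 θ))))
      = fun θ : ℝ => I * (((pker z (circleMap 0 1 θ) : ℝ) : ℂ) * F (circleMap 0 1 θ)) := by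
    funext θ
    rw [pker_eq hz (he θ)]
    simp only [smul_eq_mul]
    ring
  rw [heq] at hsum
  have hint : IntervalIntegrable (fun θ : ℝ =>
      ((pker z (circleMap 0 1 θ) : ℝ) : ℂ) * F (circleMap 0 1 θ)) MeasureTheory.volume 0 (2*π) := by
    apply Continuous.intervalIntegrable
    refine Continuous.mul ?_ hFe
    refine Continuous.comp Complex.continuous_ofReal ?_
    unfold pker
    exact continuous_const.div ((Complex.continuous_abs.comp
      ((continuous_circleMap 0 1).sub continuous_const)).pow 2)
      (fun θ => pow_ne_zero 2 (Complex.abs.ne_zero (hne1 θ)))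
  have hsum2 : (I : ℂ) * (∫ θ in (0:ℝ)..(2*π),
      ((pker z (circleMap 0 1 θ) : ℝ) : ℂ) * F (circleMap 0 1 θ)) = 2 * ↑π * I * F z := by
    rw [← intervalIntegral.integral_const_mul]
    simpa using hsum
  have key : (∫ θ in (0:ℝ)..(2*π),
      ((pker z (circleMap 0 1 θ) : ℝ) : ℂ) * F (circleMap 0 1 θ)) = (2 * ↑π) * F z := by
    refine mul_left_cancel₀ I_ne_zero ?_
    rw [hsum2]; ring
  have hre := congrArg Complex.re key
  have h3 : (∫ θ in (0:ℝ)..(2*π),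
      ((pker z (circleMap 0 1 θ) : ℝ) : ℂ) * F (circleMap 0 1 θ)).re
      = ∫ θ in (0:ℝ)..(2*π), pker z (circleMap 0 1 θ) * (F (circleMap 0 1 θ)).re := by
    rw [← Complex.reCLM_apply, ← ContinuousLinearMap.intervalIntegral_comp_comm Complex.reCLM hint]
    refine intervalIntegral.integral_congr fun θ _ => ?_
    simp [Complex.re_ofReal_mul]
  rw [h3] at hre
  have h4 : ((2 * ↑π : ℂ) * F z).re = 2 * π * (F z).re := by
    rw [show ((2:ℂ) * ↑π) = ((2 * π : ℝ) : ℂ) by push_cast; ring, Complex.re_ofReal_mul]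
  rw [h4] at hre
  rw [hre]
  have hπ : (2 * π) ≠ 0 := by positivity
  field_simp

lemma rep {F : ℂ → ℂ} (hF : DifferentiableOn ℂ F (ball 0 1)) {u : ℂ → ℝ}
    (hFu : ∀ z ∈ ball (0:ℂ) 1, u z = (F z).re)
    {r : ℝ} (hr0 : 0 < r) (hr1 : r < 1) {z : ℂ} (hz : Complex.abs z < 1) :
    u ((r:ℂ) * z) = (2 * π)⁻¹ * ∫ θ in (0:ℝ)..(2*π),
      pker z (circleMap 0 1 θ) * u ((r:ℂ) * circleMap 0 1 θ) := by
  have hmem : ∀ w : ℂ, Complex.abs w ≤ 1 → (r:ℂ) * w ∈ ball (0:ℂ) 1 := by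
    intro w hw
    rw [mem_ball_zero_iff, norm_mul, Complex.norm_eq_abs, Complex.norm_eq_abs,
      Complex.abs_ofReal, abs_of_pos hr0]
    nlinarith [Complex.abs.nonneg w]
  have hR : 1 < 1 / r := (one_lt_div hr0).2 hr1
  have hG : DifferentiableOn ℂ (fun w => F ((r:ℂ) * w)) (ball 0 (1/r)) := by
    refine DifferentiableOn.comp (t := ball (0:ℂ) 1) hF
      ((differentiable_const _).mul differentiable_id).differentiableOn ?_
    intro w hw
    rw [mem_ball_zero_iff] at hw ⊢
    rw [norm_mul, Complex.norm_eq_abs ((r:ℂ)), Complex.abs_ofReal, abs_of_pos hr0]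
    calc r * ‖w‖ < r * (1/r) := by exact mul_lt_mul_of_pos_left hw hr0
    _ = 1 := by field_simp
  have h := poisson_rep hR hG hz
  rw [hFu _ (hmem z hz.le)]
  rw [h]
  congr 1
  refine intervalIntegral.integral_congr fun θ _ => ?_
  rw [hFu _ (hmem _ (by simp))]

lemma mean {F : ℂ → ℂ} (hF : DifferentiableOn ℂ F (ball 0 1)) {u : ℂ → ℝ}
    (hFu : ∀ z ∈ ball (0:ℂ) 1, u z = (F z).re)
    {r : ℝ} (hr0 : 0 < r) (hr1 : r < 1) :
    ∫ θ in (0:ℝ)..(2*π), u ((r:ℂ) * circleMap 0 1 θ) = 2 * π * u 0 := by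
  have h := rep hF hFu hr0 hr1 (z := 0) (by simp)
  simp only [mul_zero, pker, map_zero, sub_zero, abs_circleMap_zero, one_pow, ne_eq,
    one_ne_zero, not_false_eq_true, div_self, one_mul, zero_pow, OfNat.ofNat_ne_zero, abs_one] at h
  rw [h]
  have hπ : (2*π) ≠ 0 := by positivity
  field_simp

lemma vanish {u : ℂ → ℝ}
    (hcont : ContinuousOn u (closedBall (0:ℂ) 1 \ {1}))
    (hbd : ∀ z ∈ sphere (0:ℂ) 1, z ≠ 1 → u z = 0)
    {δ η : ℝ} (hδ : 0 < δ) (hη : 0 < η) :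
    ∃ r₀ : ℝ, r₀ < 1 ∧ ∀ r : ℝ, r₀ ≤ r → r < 1 →
      ∀ w : ℂ, Complex.abs w = 1 → δ ≤ Complex.abs (w - 1) → u ((r:ℂ) * w) < η := by
  set K : Set ℂ := closedBall (0:ℂ) 1 \ ball 1 (δ/2) with hKdef
  have hK : IsCompact K := (isCompact_closedBall (0:ℂ) 1).diff isOpen_ball
  have hKsub : K ⊆ closedBall (0:ℂ) 1 \ {1} := by
    rintro x ⟨hx1, hx2⟩
    refine ⟨hx1, ?_⟩
    simp only [mem_singleton_iff]
    intro h
    exact hx2 (by simp [h, mem_ball, hδ, half_pos hδ])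
  have huc : UniformContinuousOn u K :=
    hK.uniformContinuousOn_of_continuous (hcont.mono hKsub)
  rw [Metric.uniformContinuousOn_iff] at huc
  obtain ⟨d, hd, hd'⟩ := huc η hη
  refine ⟨max (max (1 - d/2) (1 - δ/4)) 0, ?_, ?_⟩
  · apply max_lt (max_lt (by linarith) (by linarith)) one_pos
  intro r hr hr1 w hw hwδ
  have hr0 : 0 ≤ r := le_trans (le_max_right _ _) hr
  have hrd : 1 - r ≤ d/2 := by
    have := le_trans (le_max_left _ _) (le_trans (le_max_left _ _) hr); linarith
  have hrδ : 1 - r ≤ δ/4 := by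
    have := le_trans (le_max_right _ _) (le_trans (le_max_left _ _) hr); linarith
  have hw1 : w ≠ 1 := by
    intro h; rw [h] at hwδ; simp at hwδ; linarith
  have hwK : w ∈ K := by
    constructor
    · rw [mem_closedBall_zero_iff, Complex.norm_eq_abs, hw]
    · simp only [mem_ball, not_lt, dist_eq_norm, Complex.norm_eq_abs]
      calc δ/2 ≤ δ := by linarith
      _ ≤ Complex.abs (w - 1) := hwδ
  have habs_rw : Complex.abs ((r:ℂ) * w - w) = 1 - r := by
    have : (r:ℂ) * w - w = ((r:ℝ) - 1 : ℝ) * w := by push_cast; ring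
    rw [this, map_mul, Complex.abs_ofReal, hw, mul_one, _root_.abs_of_nonpos (by linarith)]
    ring
  have hrwK : (r:ℂ) * w ∈ K := by
    constructor
    · rw [mem_closedBall_zero_iff, Complex.norm_eq_abs, map_mul, Complex.abs_ofReal, hw,
        mul_one, _root_.abs_of_nonneg hr0]
      exact hr1.le
    · simp only [mem_ball, not_lt, dist_eq_norm, Complex.norm_eq_abs]
      have h1 : Complex.abs (w - 1) - Complex.abs ((r:ℂ) * w - w) ≤ Complex.abs ((r:ℂ) * w - 1) := by
        have := Complex.abs.sub_le ((r:ℂ)*w) w 1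
        have h2 := Complex.abs.sub_le w ((r:ℂ)*w) 1
        have h3 : Complex.abs (w - (r:ℂ)*w) = Complex.abs ((r:ℂ)*w - w) := by
          rw [← Complex.abs.map_neg]; congr 1; ring
        linarith
      rw [habs_rw] at h1
      linarith
  have hdist : dist ((r:ℂ) * w) w < d := by
    rw [dist_eq_norm, Complex.norm_eq_abs, habs_rw]; linarith
  have := hd' _ hrwK _ hwK hdist
  rw [hbd w (by simp [mem_sphere_iff_norm, Complex.norm_eq_abs, hw]) hw1] at this
  rw [Real.dist_eq, sub_zero] at this
  exact lt_of_le_of_lt (le_abs_self _) this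

lemma pker_lip {z w : ℂ} (hz : Complex.abs z < 1) (hw : Complex.abs w = 1) :
    |pker z w - pker z 1| ≤ 8 / (1 - Complex.abs z)^4 * Complex.abs (w - 1) := by
  set a := Complex.abs z with ha
  set A := Complex.abs (w - z) with hA
  set B := Complex.abs ((1:ℂ) - z) with hB
  have ha0 : 0 ≤ a := Complex.abs.nonneg z
  have hA1 : 1 - a ≤ A := by
    have := norm_sub_norm_le w z
    rw [Complex.norm_eq_abs, Complex.norm_eq_abs, Complex.norm_eq_abs, hw] at this
    exact this
  have hB1 : 1 - a ≤ B := by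
    have := norm_sub_norm_le (1:ℂ) z
    simpa [Complex.norm_eq_abs] using this
  have hA2 : A ≤ 2 := by
    have := norm_sub_le w z
    rw [Complex.norm_eq_abs, Complex.norm_eq_abs, Complex.norm_eq_abs, hw] at this
    linarith
  have hB2 : B ≤ 2 := by
    have := norm_sub_le (1:ℂ) z
    simp only [Complex.norm_eq_abs, map_one] at this
    linarith
  have hAB : |A - B| ≤ Complex.abs (w - 1) := by
    have := abs_norm_sub_norm_le (w - z) (1 - z)
    simp only [Complex.norm_eq_abs] at this
    calc |A - B| ≤ Complex.abs ((w - z) - (1 - z)) := this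
    _ = Complex.abs (w - 1) := by congr 1; ring
  have hApos : 0 < A := lt_of_lt_of_le (by linarith) hA1
  have hBpos : 0 < B := lt_of_lt_of_le (by linarith) hB1
  have key : pker z w - pker z 1 = (1 - a^2) * ((B^2 - A^2) / (A^2 * B^2)) := by
    rw [pker, pker, ← ha, ← hA, ← hB]
    field_simp
  rw [key, abs_mul, abs_div, _root_.abs_of_nonneg (by nlinarith : (0:ℝ) ≤ 1 - a^2),
    _root_.abs_of_pos (by positivity : (0:ℝ) < A^2 * B^2)]
  have e2 : |B^2 - A^2| ≤ 4 * Complex.abs (w - 1) := by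
    have h1 : B^2 - A^2 = (B - A) * (B + A) := by ring
    rw [h1, abs_mul]
    have h2 : |B - A| ≤ Complex.abs (w - 1) := by rw [abs_sub_comm]; exact hAB
    have h3 : |B + A| ≤ 4 := by rw [_root_.abs_of_pos (by linarith)]; linarith
    calc |B - A| * |B + A| ≤ Complex.abs (w - 1) * 4 :=
      mul_le_mul h2 h3 (abs_nonneg _) (Complex.abs.nonneg _)
    _ = 4 * Complex.abs (w - 1) := by ring
  have e3 : (1 - a)^4 ≤ A^2 * B^2 := by
    have h1 : (1-a)^2 ≤ A^2 := by nlinarith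
    have h2 : (1-a)^2 ≤ B^2 := by nlinarith
    calc (1-a)^4 = (1-a)^2 * (1-a)^2 := by ring
    _ ≤ A^2 * B^2 := mul_le_mul h1 h2 (by positivity) (by positivity)
  calc (1 - a^2) * (|B^2 - A^2| / (A^2 * B^2))
      = (1 - a^2) * |B^2 - A^2| / (A^2 * B^2) := by ring
    _ ≤ 2 * (4 * Complex.abs (w - 1)) / (1 - a)^4 := by
        apply div_le_div₀ (by positivity) ?_ (pow_pos (by linarith) 4) e3
        apply mul_le_mul (by nlinarith) e2 (abs_nonneg _) (by norm_num)
    _ = 8 / (1 - a)^4 * Complex.abs (w - 1) := by ring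

lemma pker_cont {z : ℂ} (hz : Complex.abs z < 1) :
    Continuous fun θ : ℝ => pker z (circleMap 0 1 θ) := by
  have hne1 : ∀ θ : ℝ, circleMap 0 1 θ - z ≠ 0 := fun θ =>
    sub_ne_zero.2 (fun h => absurd (h ▸ (by simp : Complex.abs (circleMap 0 1 θ) = 1)) hz.ne)
  unfold pker
  exact continuous_const.div ((Complex.continuous_abs.comp
    ((continuous_circleMap 0 1).sub continuous_const)).pow 2)
    (fun θ => pow_ne_zero 2 (Complex.abs.ne_zero (hne1 θ)))

set_option maxHeartbeats 1000000 in
/-- A positive harmonic function `u` on the unit disk (harmonic: real part of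
a holomorphic function on the disk) extending continuously to `cl(𝔻) \ {1}` with boundary
values `0` on `∂𝔻 \ {1}` is a positive constant multiple of the Poisson kernel at `1`:
`u(z) = c (1 − |z|²)/|1 − z|²`. -/
theorem stmt19 (u : ℂ → ℝ)
    (hharm : ∃ F : ℂ → ℂ, DifferentiableOn ℂ F (Metric.ball 0 1) ∧
      ∀ z ∈ Metric.ball (0 : ℂ) 1, u z = (F z).re)
    (hpos : ∀ z ∈ Metric.ball (0 : ℂ) 1, 0 < u z)
    (hcont : ContinuousOn u (Metric.closedBall (0 : ℂ) 1 \ {1}))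
    (hbd : ∀ z ∈ Metric.sphere (0 : ℂ) 1, z ≠ 1 → u z = 0) :
    ∃ c : ℝ, 0 < c ∧ ∀ z ∈ Metric.ball (0 : ℂ) 1,
      u z = c * (1 - ‖z‖ ^ 2) / ‖1 - z‖ ^ 2 := by
  obtain ⟨F, hF, hFu⟩ := hharm
  have hc : 0 < u 0 := hpos 0 (by simp)
  refine ⟨u 0, hc, fun z hzball => ?_⟩
  set c := u 0 with hcdef
  clear_value c
  have hz : Complex.abs z < 1 := by
    rwa [mem_ball_zero_iff, Complex.norm_eq_abs] at hzball
  set C : ℝ := 8 / (1 - Complex.abs z)^4 with hCdef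
  clear_value C
  have hC : 0 < C := by
    rw [hCdef]
    exact div_pos (by norm_num) (pow_pos (by linarith) 4)
  -- Tendsto A : continuity at z
  have tA : Tendsto (fun r : ℝ => u ((r:ℂ) * z)) (nhdsWithin 1 (Iio 1)) (nhds (u z)) := by
    have h1 : Tendsto (fun r : ℝ => ((r:ℂ) * z)) (nhds (1:ℝ)) (nhds z) := by
      have hcont1 : Continuous fun r : ℝ => ((r:ℂ) * z) :=
        Complex.continuous_ofReal.mul continuous_const
      have := hcont1.tendsto 1
      simpa using this
    have h2 : Tendsto (fun r : ℝ => (F ((r:ℂ) * z)).re) (nhds (1:ℝ)) (nhds ((F z).re)) :=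
      (Complex.continuous_re.tendsto _).comp
        ((hF.continuousOn.continuousAt (isOpen_ball.mem_nhds hzball)).tendsto.comp h1)
    have hev : ∀ᶠ r : ℝ in nhds (1:ℝ), (F ((r:ℂ)*z)).re = u ((r:ℂ)*z) := by
      have hopen : IsOpen {r : ℝ | ((r:ℂ)*z) ∈ ball (0:ℂ) 1} :=
        isOpen_ball.preimage (Complex.continuous_ofReal.mul continuous_const)
      have hmem1 : (1:ℝ) ∈ {r : ℝ | ((r:ℂ)*z) ∈ ball (0:ℂ) 1} := by
        simp only [mem_setOf_eq, Complex.ofReal_one, one_mul]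
        exact hzball
      filter_upwards [hopen.mem_nhds hmem1] with r hr
      exact (hFu _ hr).symm
    rw [hFu z hzball]
    exact Tendsto.congr' (hev.filter_mono nhdsWithin_le_nhds) (h2.mono_left nhdsWithin_le_nhds)
  -- Tendsto B : Poisson limit
  have tB : Tendsto (fun r : ℝ => u ((r:ℂ) * z)) (nhdsWithin 1 (Iio 1))
      (nhds (c * pker z 1)) := by
    rw [Metric.tendsto_nhds]
    intro ε hε
    set δ := ε / (2*(C*c+1)) with hδdef
    set η := ε / (2*(2*C+1)) with hηdef
    clear_value δ η
    have hδ : 0 < δ := by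
      rw [hδdef]; exact div_pos hε (by nlinarith)
    have hη : 0 < η := by
      rw [hηdef]; exact div_pos hε (by nlinarith)
    obtain ⟨r₀, hr₀1, hvan⟩ := vanish hcont hbd hδ hη
    have hmax : max r₀ 0 < 1 := max_lt hr₀1 one_pos
    filter_upwards [Ioo_mem_nhdsLT_of_mem (show (1:ℝ) ∈ Ioc (max r₀ 0) 1 from
      ⟨hmax, le_refl _⟩)] with r hr
    have hr0 : 0 < r := lt_of_le_of_lt (le_max_right r₀ 0) hr.1
    have hrr₀ : r₀ ≤ r := le_trans (le_max_left r₀ 0) hr.1.le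
    have hr1 : r < 1 := hr.2
    have hrep := rep hF hFu hr0 hr1 hz
    have hmn := mean hF hFu hr0 hr1
    rw [← hcdef] at hmn
    have hmem : ∀ θ : ℝ, (r:ℂ) * circleMap 0 1 θ ∈ ball (0:ℂ) 1 := fun θ => by
      rw [mem_ball_zero_iff, norm_mul, Complex.norm_eq_abs, Complex.norm_eq_abs,
        Complex.abs_ofReal, abs_circleMap_zero, _root_.abs_of_pos hr0]
      simpa using hr1
    have hcu : Continuous fun θ : ℝ => u ((r:ℂ) * circleMap 0 1 θ) := by
      have h1 : Continuous fun θ : ℝ => (F ((r:ℂ) * circleMap 0 1 θ)).re :=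
        Complex.continuous_re.comp (hF.continuousOn.comp_continuous
          (continuous_const.mul (continuous_circleMap 0 1)) hmem)
      exact h1.congr (fun θ => (hFu _ (hmem θ)).symm)
    have hur_pos : ∀ θ : ℝ, 0 ≤ u ((r:ℂ) * circleMap 0 1 θ) := fun θ => (hpos _ (hmem θ)).le
    have hb1 : ∀ θ ∈ Icc (0:ℝ) (2*π),
        |(pker z (circleMap 0 1 θ) - pker z 1) * u ((r:ℂ)*circleMap 0 1 θ)|
          ≤ C*δ*u ((r:ℂ)*circleMap 0 1 θ) + 2*C*η := by
      intro θ _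
      have he1 : Complex.abs (circleMap 0 1 θ) = 1 := by simp
      have hlip := pker_lip hz he1
      rw [← hCdef] at hlip
      have habs2 : Complex.abs (circleMap 0 1 θ - 1) ≤ 2 := by
        have h4 := norm_sub_le (circleMap 0 1 θ) (1:ℂ)
        simp only [Complex.norm_eq_abs, he1, map_one] at h4
        linarith
      rw [abs_mul, _root_.abs_of_nonneg (hur_pos θ)]
      by_cases hcase : Complex.abs (circleMap 0 1 θ - 1) ≤ δ
      · have h5 : |pker z (circleMap 0 1 θ) - pker z 1| ≤ C * δ :=
          le_trans hlip (by nlinarith)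
        nlinarith [hur_pos θ, mul_le_mul_of_nonneg_right h5 (hur_pos θ), hη.le, hC.le]
      · push_neg at hcase
        have hvθ := hvan r hrr₀ hr1 _ he1 hcase.le
        have h2C : |pker z (circleMap 0 1 θ) - pker z 1| ≤ 2*C := le_trans hlip (by nlinarith)
        nlinarith [mul_le_mul h2C hvθ.le (hur_pos θ) (by positivity),
          mul_nonneg (mul_nonneg hC.le hδ.le) (hur_pos θ)]
    have hb2 : |∫ θ in (0:ℝ)..(2*π),
        (pker z (circleMap 0 1 θ) - pker z 1) * u ((r:ℂ)*circleMap 0 1 θ)|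
          ≤ 2*π*(C*δ*c + 2*C*η) := by
      have hint_f : IntervalIntegrable (fun θ =>
          (pker z (circleMap 0 1 θ) - pker z 1) * u ((r:ℂ)*circleMap 0 1 θ))
          MeasureTheory.volume 0 (2*π) :=
        (((pker_cont hz).sub continuous_const).mul hcu).intervalIntegrable _ _
      calc |∫ θ in (0:ℝ)..(2*π),
          (pker z (circleMap 0 1 θ) - pker z 1) * u ((r:ℂ)*circleMap 0 1 θ)|
          ≤ ∫ θ in (0:ℝ)..(2*π),
            |(pker z (circleMap 0 1 θ) - pker z 1) * u ((r:ℂ)*circleMap 0 1 θ)| :=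
          intervalIntegral.abs_integral_le_integral_abs (by positivity)
        _ ≤ ∫ θ in (0:ℝ)..(2*π), (C*δ*u ((r:ℂ)*circleMap 0 1 θ) + 2*C*η) :=
          intervalIntegral.integral_mono_on (by positivity) hint_f.abs
            (((continuous_const.mul hcu).add continuous_const).intervalIntegrable _ _) hb1
        _ = 2*π*(C*δ*c + 2*C*η) := by
          rw [intervalIntegral.integral_add (f := fun θ => C*δ*u ((r:ℂ)*circleMap 0 1 θ)) ((continuous_const.mul hcu).intervalIntegrable _ _)
            (intervalIntegrable_const), intervalIntegral.integral_const_mul, hmn,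
            intervalIntegral.integral_const]
          simp only [smul_eq_mul, sub_zero]
          ring
    have heq : u ((r:ℂ)*z) - c * pker z 1 = (2*π)⁻¹ * ∫ θ in (0:ℝ)..(2*π),
        (pker z (circleMap 0 1 θ) - pker z 1) * u ((r:ℂ)*circleMap 0 1 θ) := by
      have h5 : ∫ θ in (0:ℝ)..(2*π),
          (pker z (circleMap 0 1 θ) - pker z 1) * u ((r:ℂ)*circleMap 0 1 θ)
          = (∫ θ in (0:ℝ)..(2*π), pker z (circleMap 0 1 θ) * u ((r:ℂ)*circleMap 0 1 θ))
            - pker z 1 * (2*π*c) := by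
        simp_rw [sub_mul]
        rw [intervalIntegral.integral_sub (f := fun θ => pker z (circleMap 0 1 θ) * u ((r:ℂ)*circleMap 0 1 θ))
          (g := fun θ => pker z 1 * u ((r:ℂ)*circleMap 0 1 θ)) (((pker_cont hz).mul hcu).intervalIntegrable _ _)
          ((continuous_const.mul hcu).intervalIntegrable _ _),
          intervalIntegral.integral_const_mul, hmn]
      rw [h5, hrep]
      have hπ : (2*π) ≠ 0 := by positivity
      field_simp
    rw [Real.dist_eq, heq, abs_mul, _root_.abs_of_pos (by positivity : (0:ℝ) < (2*π)⁻¹)]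
    have hstep : (2*π)⁻¹ * |∫ θ in (0:ℝ)..(2*π),
        (pker z (circleMap 0 1 θ) - pker z 1) * u ((r:ℂ)*circleMap 0 1 θ)|
        ≤ C*δ*c + 2*C*η := by
      calc (2*π)⁻¹ * |∫ θ in (0:ℝ)..(2*π),
          (pker z (circleMap 0 1 θ) - pker z 1) * u ((r:ℂ)*circleMap 0 1 θ)|
          ≤ (2*π)⁻¹ * (2*π*(C*δ*c + 2*C*η)) := mul_le_mul_of_nonneg_left hb2 (by positivity)
        _ = C*δ*c + 2*C*η := by
          rw [← mul_assoc, inv_mul_cancel₀ (by positivity : (2*π) ≠ 0), one_mul]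
    have hkey1 : δ * (C*c+1) = ε/2 := by
      rw [hδdef]; field_simp
    have hkey2 : η * (2*C+1) = ε/2 := by
      rw [hηdef]; field_simp
    have h6 : C*δ*c < ε/2 := by nlinarith
    have h7 : 2*C*η < ε/2 := by nlinarith
    linarith
  have := tendsto_nhds_unique tA tB
  rw [this, pker, mul_div_assoc]
  rfl
end
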